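/- Let q be a prime power, n ≥ 1, and let A ∈ GL_n(𝔽_q) with minimal polynomial p ∈ 𝔽_q[X] and characteristic polynomial χ ∈ 𝔽_q[X]. If the order of A in GL_n(𝔽_q) equals q^n − 1, then p = χ. Moreover, the following are equivalent: (a) the order of A equals q^n − 1; (b) p is a primitive polynomial of degree n; (c) χ is a primitive polynomial. -/

import Mathlib

open Polynomial Matrix

/-- The order of a polynomial `f` over a finite field: the least positive
integer `e` such that `f` divides `X ^ e - 1`. -/
noncomputable def polyOrd {F : Type*} [Field F] (f : F[X]) : ℕ :=
  sInf {e : ℕ | 0 < e ∧ f ∣ X ^ e - 1}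

/-- A monic polynomial `f` of degree `n` over `𝔽_q` is primitive if `f(0) ≠ 0`
and `ord f = q ^ n - 1`. -/
def IsPrimitivePoly {F : Type*} [Field F] [Fintype F] (f : F[X]) : Prop :=
  f.Monic ∧ f.eval 0 ≠ 0 ∧ polyOrd f = Fintype.card F ^ f.natDegree - 1

/-- If `f(0) ≠ 0` then the image of `X` in `F[X]/(f)` is a unit. -/
theorem aux_isUnit_root {F : Type*} [Field F] (f : F[X]) (h0 : f.eval 0 ≠ 0) :
    IsUnit (AdjoinRoot.root f) := by
  set c : F := f.coeff 0 with hc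
  have hc0 : c ≠ 0 := by rw [hc, coeff_zero_eq_eval_zero]; exact h0
  apply IsUnit.of_mul_eq_one (AdjoinRoot.mk f (C (-c⁻¹) * f.divX))
  have key : AdjoinRoot.mk f (X * f.divX + C c) = 0 := by
    rw [Polynomial.X_mul_divX_add]; exact AdjoinRoot.mk_self
  have h1 : (AdjoinRoot.root f) * (AdjoinRoot.mk f f.divX) + algebraMap F _ c = 0 := by
    simpa [map_add, _root_.map_mul, AdjoinRoot.mk_X, AdjoinRoot.mk_C] using key
  have h2 : (AdjoinRoot.root f) * (AdjoinRoot.mk f f.divX) = - algebraMap F (AdjoinRoot f) c := by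
    linear_combination h1
  have h3 : (algebraMap F (AdjoinRoot f)) (-c⁻¹) * (-(algebraMap F (AdjoinRoot f)) c) = 1 := by
    rw [← map_neg, ← _root_.map_mul]
    simp [neg_mul_neg, inv_mul_cancel₀ hc0]
  rw [_root_.map_mul, AdjoinRoot.mk_C]
  calc AdjoinRoot.root f * ((algebraMap F (AdjoinRoot f)) (-c⁻¹) * AdjoinRoot.mk f f.divX)
      = (algebraMap F (AdjoinRoot f)) (-c⁻¹) * (AdjoinRoot.root f * AdjoinRoot.mk f f.divX) := by
        ring
    _ = 1 := by rw [h2, h3]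

/-- There is a positive `e ≤ q ^ deg f - 1` with `f ∣ X ^ e - 1`. -/
theorem aux_polyOrd_bound {F : Type*} [Field F] [Fintype F] (f : F[X])
    (hd : 1 ≤ f.natDegree) (h0 : f.eval 0 ≠ 0) :
    ∃ e, (0 < e ∧ f ∣ X ^ e - 1) ∧ e ≤ Fintype.card F ^ f.natDegree - 1 := by
  have hf : f ≠ 0 := fun h => by simp [h] at hd
  letI : Fintype (AdjoinRoot f) := Module.fintypeOfFintype (AdjoinRoot.powerBasis hf).basis
  have hcard : Fintype.card (AdjoinRoot f) = Fintype.card F ^ f.natDegree := by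
    have := Module.card_fintype (AdjoinRoot.powerBasis hf).basis
    rw [this]; congr 1; convert Fintype.card_fin _; simp [AdjoinRoot.powerBasis]
  have hnt : Nontrivial (AdjoinRoot f) := by
    rw [← Fintype.one_lt_card_iff_nontrivial, hcard]
    calc 1 < Fintype.card F := Fintype.one_lt_card
      _ = Fintype.card F ^ 1 := (pow_one _).symm
      _ ≤ Fintype.card F ^ f.natDegree := Nat.pow_le_pow_right (le_of_lt Fintype.one_lt_card) hd
  obtain ⟨u, hu⟩ := aux_isUnit_root f h0
  refine ⟨orderOf u, ⟨orderOf_pos u, ?_⟩, ?_⟩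
  · have hpow : (AdjoinRoot.root f) ^ (orderOf u) = 1 := by
      rw [← hu, ← Units.val_pow_eq_pow_val, pow_orderOf_eq_one, Units.val_one]
    rw [← AdjoinRoot.mk_eq_zero]
    rw [map_sub, map_pow, AdjoinRoot.mk_X, _root_.map_one, hpow, sub_self]
  · have h1 : orderOf u ≤ Fintype.card (AdjoinRoot f)ˣ := orderOf_le_card_univ
    have h2 : Fintype.card (AdjoinRoot f)ˣ < Fintype.card (AdjoinRoot f) := by
      apply Fintype.card_lt_of_injective_of_notMem ((↑) : (AdjoinRoot f)ˣ → AdjoinRoot f)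
        Units.val_injective (b := 0)
      rintro ⟨v, hv⟩
      exact v.ne_zero hv
    omega

theorem aux_pow_eq_one_iff_coe {F : Type*} [Field F] {n : ℕ} (A : GL (Fin n) F) (e : ℕ) :
    A ^ e = 1 ↔ (A : Matrix (Fin n) (Fin n) F) ^ e = 1 := by
  rw [← Units.val_pow_eq_pow_val]
  constructor
  · intro h; rw [h]; rfl
  · intro h; exact Units.ext h

theorem aux_dvd_iff_pow_eq_one {F : Type*} [Field F] {n : ℕ}
    (A : GL (Fin n) F) (e : ℕ) :
    minpoly F (A : Matrix (Fin n) (Fin n) F) ∣ X ^ e - 1 ↔ A ^ e = 1 := by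
  set M : Matrix (Fin n) (Fin n) F := (A : Matrix (Fin n) (Fin n) F)
  have haev : (aeval M) (X ^ e - 1 : F[X]) = M ^ e - 1 := by
    simp [map_sub, map_pow]
  rw [aux_pow_eq_one_iff_coe]
  constructor
  · rintro ⟨c, hc⟩
    have h1 : (aeval M) (X ^ e - 1 : F[X]) = 0 := by
      rw [hc, _root_.map_mul, minpoly.aeval, zero_mul]
    rwa [haev, sub_eq_zero] at h1
  · intro h
    apply minpoly.dvd
    rw [haev, sub_eq_zero]; exact h

theorem aux_orderOf_eq_polyOrd {F : Type*} [Field F] [Fintype F] {n : ℕ}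
    (A : GL (Fin n) F) :
    orderOf A = polyOrd (minpoly F (A : Matrix (Fin n) (Fin n) F)) := by
  have hpos : 0 < orderOf A := orderOf_pos A
  have hmem : orderOf A ∈ {e : ℕ | 0 < e ∧ minpoly F (A : Matrix (Fin n) (Fin n) F) ∣ X ^ e - 1} :=
    ⟨hpos, (aux_dvd_iff_pow_eq_one A _).mpr (pow_orderOf_eq_one A)⟩
  apply le_antisymm
  · obtain ⟨h1, h2⟩ := Nat.sInf_mem (Set.nonempty_of_mem hmem)
    exact orderOf_le_of_pow_eq_one h1 ((aux_dvd_iff_pow_eq_one A _).mp h2)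
  · exact Nat.sInf_le hmem

/-- A primitive polynomial is irreducible. -/
theorem aux_irreducible_of_polyOrd {F : Type*} [Field F] [Fintype F] (f : F[X])
    (hm : f.Monic) (hd : 1 ≤ f.natDegree) (h0 : f.eval 0 ≠ 0)
    (hord : polyOrd f = Fintype.card F ^ f.natDegree - 1) : Irreducible f := by
  have hq : 1 < Fintype.card F := Fintype.one_lt_card
  have hqd : 1 < Fintype.card F ^ f.natDegree := by
    calc 1 < Fintype.card F := hq
      _ = Fintype.card F ^ 1 := (pow_one _).symm
      _ ≤ Fintype.card F ^ f.natDegree := Nat.pow_le_pow_right (le_of_lt hq) hd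
  have hf : f ≠ 0 := hm.ne_zero
  have hne : {e : ℕ | 0 < e ∧ f ∣ X ^ e - 1}.Nonempty := by
    by_contra h
    rw [Set.not_nonempty_iff_eq_empty] at h
    rw [polyOrd, h, Nat.sInf_empty] at hord
    omega
  have hsmem := Nat.sInf_mem hne
  rw [← polyOrd, hord] at hsmem
  obtain ⟨hepos, hedvd⟩ := hsmem
  letI : Fintype (AdjoinRoot f) := Module.fintypeOfFintype (AdjoinRoot.powerBasis hf).basis
  have hcard : Fintype.card (AdjoinRoot f) = Fintype.card F ^ f.natDegree := by
    have := Module.card_fintype (AdjoinRoot.powerBasis hf).basis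
    rw [this]; congr 1; convert Fintype.card_fin _; simp [AdjoinRoot.powerBasis]
  have hnt : Nontrivial (AdjoinRoot f) := by
    rw [← Fintype.one_lt_card_iff_nontrivial, hcard]; exact hqd
  obtain ⟨u, hu⟩ := aux_isUnit_root f h0
  have horder : orderOf u = Fintype.card F ^ f.natDegree - 1 := by
    apply le_antisymm
    · apply orderOf_le_of_pow_eq_one hepos
      apply Units.ext
      rw [Units.val_pow_eq_pow_val, hu, Units.val_one]
      have : AdjoinRoot.mk f (X ^ (Fintype.card F ^ f.natDegree - 1) - 1) = 0 :=
        AdjoinRoot.mk_eq_zero.mpr hedvd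
      rw [map_sub, map_pow, AdjoinRoot.mk_X, _root_.map_one, sub_eq_zero] at this
      exact this
    · rw [← hord]
      apply Nat.sInf_le
      refine ⟨orderOf_pos u, ?_⟩
      rw [← AdjoinRoot.mk_eq_zero, map_sub, map_pow, AdjoinRoot.mk_X, _root_.map_one,
        sub_eq_zero, ← hu, ← Units.val_pow_eq_pow_val, pow_orderOf_eq_one, Units.val_one]
  have hunits : ∀ x : AdjoinRoot f, x ≠ 0 → IsUnit x := by
    have hle : Fintype.card F ^ f.natDegree - 1 ≤ Fintype.card (AdjoinRoot f)ˣ :=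
      horder ▸ orderOf_le_card_univ
    have hlt : Fintype.card (AdjoinRoot f)ˣ < Fintype.card (AdjoinRoot f) := by
      apply Fintype.card_lt_of_injective_of_notMem
        ((↑) : (AdjoinRoot f)ˣ → AdjoinRoot f) Units.val_injective (b := 0)
      rintro ⟨v, hv⟩; exact v.ne_zero hv
    set j : (AdjoinRoot f)ˣ → {x : AdjoinRoot f // x ≠ 0} := fun v => ⟨v, v.ne_zero⟩ with hj
    have hinj : Function.Injective j := by
      intro a b hab
      exact Units.ext (congrArg Subtype.val hab)
    have hcards : Fintype.card {x : AdjoinRoot f // x ≠ 0} = Fintype.card (AdjoinRoot f) - 1 := by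
      rw [Fintype.card_subtype_compl (· = 0)]
      simp [Fintype.card_subtype_eq]
    have hsurj : Function.Surjective j := by
      have := (Fintype.bijective_iff_injective_and_card j).mpr ⟨hinj, by omega⟩
      exact this.2
    intro x hx
    obtain ⟨v, hv⟩ := hsurj ⟨x, hx⟩
    exact ⟨v, congrArg Subtype.val hv⟩
  constructor
  · exact not_isUnit_of_natDegree_pos f hd
  · intro a b hab
    by_cases ha : AdjoinRoot.mk f a = 0
    · right
      obtain ⟨c, hc⟩ := AdjoinRoot.mk_eq_zero.mp ha
      have heq : f * 1 = f * (c * b) := by linear_combination hab + b * hc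
      have hcb : c * b = 1 := (mul_left_cancel₀ hf heq).symm
      exact IsUnit.of_mul_eq_one (a := b) c (by linear_combination hcb)
    · left
      have hb : AdjoinRoot.mk f b = 0 := by
        have hmul : AdjoinRoot.mk f a * AdjoinRoot.mk f b = 0 := by
          rw [← _root_.map_mul, ← hab]; exact AdjoinRoot.mk_self
        obtain ⟨v, hv⟩ := hunits _ ha
        calc AdjoinRoot.mk f b = ↑v⁻¹ * (AdjoinRoot.mk f a * AdjoinRoot.mk f b) := by
              rw [← hv, ← mul_assoc, Units.inv_mul, one_mul]
          _ = 0 := by rw [hmul, mul_zero]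
      obtain ⟨c, hc⟩ := AdjoinRoot.mk_eq_zero.mp hb
      have heq : f * 1 = f * (c * a) := by linear_combination hab + a * hc
      have hca : c * a = 1 := (mul_left_cancel₀ hf heq).symm
      exact IsUnit.of_mul_eq_one (a := a) c (by linear_combination hca)

/-- For `A ∈ GL_n(𝔽_q)` with minimal polynomial `p` and characteristic polynomial `χ`:
if `o(A) = q^n - 1` then `p = χ`; moreover `o(A) = q^n - 1` iff `p` is primitive of
degree `n`, iff `χ` is primitive. -/
theorem stmt_6 {F : Type*} [Field F] [Fintype F] (n : ℕ) (hn : 1 ≤ n)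
    (A : GL (Fin n) F) (p χ : F[X])
    (hp : p = minpoly F (A : Matrix (Fin n) (Fin n) F))
    (hχ : χ = Matrix.charpoly (A : Matrix (Fin n) (Fin n) F)) :
    (orderOf A = Fintype.card F ^ n - 1 → p = χ) ∧
    (orderOf A = Fintype.card F ^ n - 1 ↔ IsPrimitivePoly p ∧ p.natDegree = n) ∧
    (orderOf A = Fintype.card F ^ n - 1 ↔ IsPrimitivePoly χ) := by
  subst hp hχ
  haveI : NeZero n := ⟨by omega⟩
  set M : Matrix (Fin n) (Fin n) F := (A : Matrix (Fin n) (Fin n) F) with hM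
  have hint : IsIntegral F M := IsIntegral.of_finite F M
  have pm : (minpoly F M).Monic := minpoly.monic hint
  have pd1 : 0 < (minpoly F M).natDegree := minpoly.natDegree_pos hint
  have pdvd : minpoly F M ∣ M.charpoly := Matrix.minpoly_dvd_charpoly M
  have χm : M.charpoly.Monic := Matrix.charpoly_monic M
  have χdeg : M.charpoly.natDegree = n := by
    simpa using Matrix.charpoly_natDegree_eq_dim M
  have hordA : orderOf A = polyOrd (minpoly F M) := aux_orderOf_eq_polyOrd A
  have hq : 1 < Fintype.card F := Fintype.one_lt_card
  have hp0 : (minpoly F M).eval 0 ≠ 0 := by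
    have hdvd : minpoly F M ∣ X ^ (orderOf A) - 1 :=
      (aux_dvd_iff_pow_eq_one A _).mpr (pow_orderOf_eq_one A)
    have hev := Polynomial.eval_dvd (x := (0 : F)) hdvd
    intro h
    rw [h, zero_dvd_iff, eval_sub, eval_pow, eval_X, eval_one,
      zero_pow (orderOf_pos A).ne', zero_sub, neg_eq_zero] at hev
    exact one_ne_zero hev
  -- if the order is q^n - 1 then the minimal polynomial has degree n
  have degn : orderOf A = Fintype.card F ^ n - 1 → (minpoly F M).natDegree = n := by
    intro ha
    by_contra hnedeg
    have hlt : (minpoly F M).natDegree < n :=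
      lt_of_le_of_ne ((natDegree_le_of_dvd pdvd χm.ne_zero).trans_eq χdeg) hnedeg
    obtain ⟨e, ⟨hepos, hedvd⟩, hele⟩ := aux_polyOrd_bound (minpoly F M) pd1 hp0
    have h1 : polyOrd (minpoly F M) ≤ e := Nat.sInf_le ⟨hepos, hedvd⟩
    have h2 : Fintype.card F ^ (minpoly F M).natDegree < Fintype.card F ^ n :=
      Nat.pow_lt_pow_right hq hlt
    rw [hordA] at ha
    omega
  have peqχ : orderOf A = Fintype.card F ^ n - 1 → minpoly F M = M.charpoly := by
    intro ha
    have hdn := degn ha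
    obtain ⟨c, hc⟩ := pdvd
    have hc0 : c ≠ 0 := by
      rintro rfl
      rw [mul_zero] at hc
      exact χm.ne_zero hc
    have hdegs : M.charpoly.natDegree = (minpoly F M).natDegree + c.natDegree := by
      rw [hc, natDegree_mul pm.ne_zero hc0]
    have hcd : c.natDegree = 0 := by omega
    have hcm : c.Monic := pm.of_mul_monic_left (hc ▸ χm)
    have hc1 : c = 1 := hcm.natDegree_eq_zero.mp hcd
    rw [hc, hc1, mul_one]
  refine ⟨peqχ, ⟨?_, ?_⟩, ⟨?_, ?_⟩⟩
  · intro ha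
    have hdn := degn ha
    refine ⟨⟨pm, hp0, ?_⟩, hdn⟩
    rw [hdn, ← ha]
    exact hordA.symm
  · rintro ⟨⟨_, _, hordp⟩, hdn⟩
    rw [hordA, hordp, hdn]
  · intro ha
    have hpc := peqχ ha
    have hdn := degn ha
    refine ⟨χm, by rw [← hpc]; exact hp0, ?_⟩
    rw [← hpc, hdn, ← ha]
    exact hordA.symm
  · rintro ⟨hχm, hχ0, hχord⟩
    have hχd1 : 1 ≤ M.charpoly.natDegree := by omega
    have hirr : Irreducible M.charpoly := aux_irreducible_of_polyOrd _ χm hχd1 hχ0 hχord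
    obtain ⟨c, hc⟩ := pdvd
    rcases hirr.isUnit_or_isUnit hc with hup | huc
    · exact absurd hup (not_isUnit_of_natDegree_pos _ pd1)
    · have hassoc : Associated (minpoly F M) M.charpoly :=
        ⟨huc.unit, by rw [IsUnit.unit_spec]; exact hc.symm⟩
      have hpc : minpoly F M = M.charpoly := eq_of_monic_of_associated pm χm hassoc
      rw [hordA, hpc, hχord, χdeg]
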